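/- arXiv:2312.06939 — 2 statements merged into one kernel-verified Lean document; each statement's English description precedes it below -/
import Mathlib

section
/- If the Choi matrix ρ^Λ = (id⊗Λ)(|Ψ⟩⟨Ψ|) of a qubit channel Λ is a separable two-qubit state, then Λ is entanglement-breaking. -/
open Matrix BigOperators
open scoped Kronecker ComplexOrder

noncomputable section

abbrev M2 := Matrix (Fin 2) (Fin 2) ℂ
abbrev M4 := Matrix (Fin 2 × Fin 2) (Fin 2 × Fin 2) ℂ

/-- The Pauli matrices `σ₁, σ₂, σ₃`. -/
def pauli : Fin 3 → M2 :=
  ![!![0, 1; 1, 0], !![0, -Complex.I; Complex.I, 0], !![1, 0; 0, -1]]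

/-- The Choi matrix `ρ^Λ = (id ⊗ Λ)(|Ψ⟩⟨Ψ|)` of a linear map on `2 × 2` matrices,
where `|Ψ⟩ = (|00⟩ + |11⟩)/√2`, so that `|Ψ⟩⟨Ψ| = (1/2) ∑ i j, E i j ⊗ E i j`. -/
def Choi (Λ : M2 →ₗ[ℂ] M2) : M4 :=
  (1/2 : ℂ) • ∑ i : Fin 2, ∑ j : Fin 2,
    (single i j (1 : ℂ)) ⊗ₖ (Λ (single i j (1 : ℂ)))

/-- A linear map is trace preserving if it preserves the trace of every matrix. -/
def TracePreserving (Λ : M2 →ₗ[ℂ] M2) : Prop := ∀ ρ : M2, (Λ ρ).trace = ρ.trace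

/-- A qubit channel: a trace-preserving linear map on `2 × 2` complex matrices that is
completely positive (equivalently, its Choi matrix is positive semidefinite). -/
def IsQubitChannel (Λ : M2 →ₗ[ℂ] M2) : Prop :=
  TracePreserving Λ ∧ (Choi Λ).PosSemidef

/-- A density matrix: positive semidefinite with trace one. -/
def IsDensity {n : Type*} [Fintype n] [DecidableEq n] (ρ : Matrix n n ℂ) : Prop :=
  ρ.PosSemidef ∧ ρ.trace = 1

/-- A qubit channel is entanglement breaking if it is of measure-and-prepare form
`Λ(ρ) = ∑ k, Tr(M k * ρ) • σ k` for a POVM `M` and density matrices `σ k`. -/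
def IsEB (Λ : M2 →ₗ[ℂ] M2) : Prop :=
  ∃ (n : ℕ) (M : Fin n → M2) (σ : Fin n → M2),
    (∀ k, (M k).PosSemidef) ∧ (∑ k, M k = 1) ∧ (∀ k, IsDensity (σ k)) ∧
    (∀ ρ : M2, Λ ρ = ∑ k, ((M k * ρ).trace) • σ k)

/-- A two-qubit matrix is separable if it is a finite convex combination of tensor products
of `2 × 2` density matrices. -/
def IsSepState (ρ : M4) : Prop :=
  ∃ (n : ℕ) (p : Fin n → ℝ) (ρA ρB : Fin n → M2),
    (∀ i, 0 ≤ p i) ∧ (∑ i, p i = 1) ∧ (∀ i, IsDensity (ρA i)) ∧ (∀ i, IsDensity (ρB i)) ∧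
    ρ = ∑ i, ((p i : ℝ) : ℂ) • ((ρA i) ⊗ₖ (ρB i))

lemma psd_real_smul {c : ℝ} (hc : 0 ≤ c) {M : M2} (hM : M.PosSemidef) :
    ((c : ℂ) • M).PosSemidef := by
  constructor
  · show ((c : ℂ) • M)ᴴ = _
    rw [conjTranspose_smul, hM.1.eq]
    simp [Complex.conj_ofReal]
  · intro x
    have := hM.2 x
    have h := mul_nonneg (show (0:ℂ) ≤ (c:ℂ) from by exact_mod_cast hc) this
    simpa [smul_mulVec, dotProduct_smul, smul_eq_mul, mul_add, Finsupp.mul_sum, mul_left_comm, mul_assoc] using h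

/-- if the Choi matrix of a qubit channel is separable, then the channel is
entanglement breaking. -/
theorem stmt8 (Λ : M2 →ₗ[ℂ] M2) (hΛ : IsQubitChannel Λ) (hsep : IsSepState (Choi Λ)) :
    IsEB Λ := by
  obtain ⟨hTP, _⟩ := hΛ
  obtain ⟨n, p, ρA, ρB, hp, hpsum, hA, hB, hChoi⟩ := hsep
  -- key formula for Λ on standard basis matrices
  have key : ∀ i j : Fin 2, Λ (single i j 1) =
      ∑ k, ((2 : ℂ) * (p k : ℂ) * (ρA k i j)) • ρB k := by
    intro i j
    ext a b
    have h1 : Choi Λ (i, a) (j, b) = (1/2 : ℂ) * (Λ (single i j 1)) a b := by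
      simp [Choi, Matrix.sum_apply, kroneckerMap_apply, Matrix.single,
        ite_mul, Finset.sum_ite_eq]
      fin_cases i <;> fin_cases j <;> simp
    have h2 : Choi Λ (i, a) (j, b) = ∑ k, (p k : ℂ) * (ρA k i j * ρB k a b) := by
      rw [hChoi]
      simp [Matrix.sum_apply, kroneckerMap_apply]
    have := h1.symm.trans h2
    rw [Matrix.sum_apply]
    simp only [Matrix.smul_apply, smul_eq_mul]
    have h3 : (Λ (single i j 1)) a b
        = 2 * ((1/2 : ℂ) * (Λ (single i j 1)) a b) := by ring
    rw [h3, this, Finset.mul_sum]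
    apply Finset.sum_congr rfl
    intro k _
    ring
  -- trace of Λ on basis matrices via trace preservation
  have keytr : ∀ i j : Fin 2,
      ∑ k, (2 : ℂ) * (p k : ℂ) * (ρA k i j) = (1 : M2) j i := by
    intro i j
    have h1 := hTP (single i j 1)
    rw [key i j] at h1
    rw [trace_sum] at h1
    simp only [trace_smul, smul_eq_mul] at h1
    have h2 : ∀ k, (2 : ℂ) * (p k : ℂ) * (ρA k i j) * (ρB k).trace
        = (2 : ℂ) * (p k : ℂ) * (ρA k i j) := by
      intro k; rw [(hB k).2, mul_one]
    rw [Finset.sum_congr rfl (fun k _ => h2 k)] at h1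
    rw [h1]
    by_cases hij : i = j
    · subst hij; simp [Matrix.one_apply]
    · rw [Matrix.trace_single_eq_of_ne i j (1 : ℂ) hij]
      simp [Matrix.one_apply, Ne.symm hij]
  refine ⟨n, fun k => ((2 * p k : ℝ) : ℂ) • (ρA k)ᵀ, ρB, ?_, ?_, hB, ?_⟩
  · intro k
    exact psd_real_smul (mul_nonneg (by norm_num) (hp k)) (hA k).1.transpose
  · ext a b
    rw [Matrix.sum_apply]
    simp only [Matrix.smul_apply, Matrix.transpose_apply, smul_eq_mul]
    have := keytr b a
    rw [← this]
    apply Finset.sum_congr rfl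
    intro k _
    push_cast
    ring
  · intro ρ
    have hexp : ρ = ∑ i : Fin 2, ∑ j : Fin 2, ρ i j • single i j (1 : ℂ) := by
      conv_lhs => rw [matrix_eq_sum_single ρ]
      apply Finset.sum_congr rfl; intro i _
      apply Finset.sum_congr rfl; intro j _
      rw [smul_single, smul_eq_mul, mul_one]
    have htr : ∀ k, ((((2 * p k : ℝ) : ℂ) • (ρA k)ᵀ) * ρ).trace
        = ∑ i : Fin 2, ∑ j : Fin 2, ρ i j * ((2 : ℂ) * (p k : ℂ) * ρA k i j) := by
      intro k
      rw [Matrix.trace, Fin.sum_univ_two]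
      simp only [Matrix.diag_apply, Matrix.mul_apply, Matrix.smul_apply,
        Matrix.transpose_apply, smul_eq_mul, Fin.sum_univ_two]
      push_cast
      ring
    conv_lhs => rw [hexp]
    rw [map_sum]
    simp_rw [map_sum, _root_.map_smul, key]
    have hrhs : (∑ k, ((((2 * p k : ℝ) : ℂ) • (ρA k)ᵀ) * ρ).trace • ρB k)
        = ∑ k, (∑ i : Fin 2, ∑ j : Fin 2, ρ i j * ((2 : ℂ) * (p k : ℂ) * ρA k i j)) • ρB k :=
      Finset.sum_congr rfl (fun k _ => by rw [htr k])
    rw [hrhs]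
    simp_rw [Finset.smul_sum, Finset.sum_smul, smul_smul]
    calc (∑ i : Fin 2, ∑ j : Fin 2, ∑ k, (ρ i j * ((2:ℂ) * (p k : ℂ) * ρA k i j)) • ρB k)
        = ∑ i : Fin 2, ∑ k, ∑ j : Fin 2, (ρ i j * ((2:ℂ) * (p k : ℂ) * ρA k i j)) • ρB k :=
          Finset.sum_congr rfl (fun i _ => Finset.sum_comm ..)
      _ = ∑ k, ∑ i : Fin 2, ∑ j : Fin 2, (ρ i j * ((2:ℂ) * (p k : ℂ) * ρA k i j)) • ρB k :=
          Finset.sum_comm ..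
end
end

section
/- If a two-qubit state ρ is separable, then its partial transpose ρ^{T_B} (transpose on the second tensor factor) is positive semidefinite. -/
open Matrix BigOperators
open scoped Kronecker ComplexOrder

noncomputable section

/-- The partial transpose on the second tensor factor:
`(ρ^{T_B})_{(i,k),(j,l)} = ρ_{(i,l),(j,k)}`. -/
def ptB (ρ : M4) : M4 :=
  Matrix.of fun p q : Fin 2 × Fin 2 => ρ (p.1, q.2) (q.1, p.2)

lemma conjTranspose_kron {m n : Type*} [Fintype m] [Fintype n]
    (A : Matrix m m ℂ) (B : Matrix n n ℂ) : (A ⊗ₖ B)ᴴ = Aᴴ ⊗ₖ Bᴴ := by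
  ext ⟨i, k⟩ ⟨j, l⟩
  simp [conjTranspose_apply, kroneckerMap_apply]

lemma kron_posSemidef {A B : M2} (hA : A.PosSemidef) (hB : B.PosSemidef) :
    (A ⊗ₖ B).PosSemidef := by
  exact hA.kronecker hB

lemma psd_smul {M : M4} (hM : M.PosSemidef) {r : ℝ} (hr : 0 ≤ r) :
    (((r : ℝ) : ℂ) • M).PosSemidef := by
  refine posSemidef_iff_dotProduct_mulVec.mpr ⟨?_, fun x => ?_⟩
  · unfold Matrix.IsHermitian
    rw [conjTranspose_smul, hM.1.eq]
    congr 1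
    simp [Complex.ext_iff]
  · rw [smul_mulVec, dotProduct_smul, smul_eq_mul]
    exact mul_nonneg (by exact_mod_cast Complex.zero_le_real.mpr hr) (hM.dotProduct_mulVec_nonneg x)

lemma psd_sum {n : ℕ} (f : Fin n → M4) (h : ∀ i, (f i).PosSemidef) :
    (∑ i, f i).PosSemidef := by
  refine posSemidef_iff_dotProduct_mulVec.mpr ⟨?_, fun x => ?_⟩
  · unfold Matrix.IsHermitian
    rw [conjTranspose_sum]
    exact Finset.sum_congr rfl fun i _ => (h i).1.eq
  · have hs : (∑ i, f i) *ᵥ x = ∑ i, f i *ᵥ x := by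
      ext j
      simp [mulVec, dotProduct, Matrix.sum_apply, Finset.sum_mul]
      exact Finset.sum_comm
    have hd : star x ⬝ᵥ ∑ i, f i *ᵥ x = ∑ i, star x ⬝ᵥ (f i *ᵥ x) := by
      simp [dotProduct, Finset.mul_sum, Finset.sum_apply]
      exact Finset.sum_comm
    rw [hs, hd]
    exact Finset.sum_nonneg fun i _ => (h i).dotProduct_mulVec_nonneg x

lemma ptB_kron (A B : M2) : ptB (A ⊗ₖ B) = A ⊗ₖ Bᵀ := by
  ext ⟨i, k⟩ ⟨j, l⟩
  simp [ptB, kroneckerMap_apply, transpose_apply]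

/-- the partial transpose of a separable two-qubit state is positive
semidefinite. -/
theorem stmt11 (ρ : M4) (hρ : IsDensity ρ) (hsep : IsSepState ρ) :
    (ptB ρ).PosSemidef := by
  obtain ⟨n, p, ρA, ρB, hp, _, hA, hB, rfl⟩ := hsep
  have : ptB (∑ i, ((p i : ℝ) : ℂ) • ((ρA i) ⊗ₖ (ρB i)))
      = ∑ i, ((p i : ℝ) : ℂ) • ((ρA i) ⊗ₖ (ρB i)ᵀ) := by
    ext ⟨a, b⟩ ⟨c, d⟩
    simp [ptB, Matrix.sum_apply, kroneckerMap_apply, transpose_apply]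
  rw [this]
  exact psd_sum _ fun i => psd_smul (kron_posSemidef (hA i).1 ((hB i).1.transpose)) (hp i)
end
end
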